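/- Under the Volterra map u_i = exp(p_i + (1/2)(q_{i+1} - q_{i-1})) (with q_0 = q_{2n} = 0), the canonical Hamiltonian system q̇_i = ∂h_1/∂p_i, ṗ_i = -∂h_1/∂q_i with h_1(q,p) = Σ_{i=1}^{2n-1} exp(p_i + (1/2)(q_{i+1} - q_{i-1})) projects to the KM system: if (q(t), p(t)) solves the canonical equations and u_i(t) = exp(p_i(t) + (1/2)(q_{i+1}(t) - q_{i-1}(t))), then u̇_i = u_i(u_{i+1} - u_{i-1}) with u_0 = u_{2n} = 0. -/

import Mathlib

/-- The Hamiltonian `h₁(q,p) = ∑_{i=1}^{2n-1} exp(pᵢ + (1/2)(qᵢ₊₁ - qᵢ₋₁))`. -/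
noncomputable def h1Ham (n : ℕ) (q p : ℕ → ℝ) : ℝ :=
  ∑ i ∈ Finset.Icc 1 (2 * n - 1), Real.exp (p i + (q (i + 1) - q (i - 1)) / 2)

lemma h1Ham_dP (n i : ℕ) (hi : i ∈ Finset.Icc 1 (2 * n - 1)) (q p : ℕ → ℝ) :
    HasDerivAt (fun x => h1Ham n q (Function.update p i x))
      (Real.exp (p i + (q (i + 1) - q (i - 1)) / 2)) (p i) := by
  have h : ∀ j ∈ Finset.Icc 1 (2 * n - 1),
      HasDerivAt (fun x => Real.exp (Function.update p i x j + (q (j + 1) - q (j - 1)) / 2))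
        (if j = i then Real.exp (p i + (q (i + 1) - q (i - 1)) / 2) else 0) (p i) := by
    intro j hj
    by_cases hji : j = i
    · subst hji
      simp only [Function.update_self, if_pos rfl]
      have key := ((hasDerivAt_id (p j)).add_const ((q (j + 1) - q (j - 1)) / 2)).exp
      simpa using key
    · simp only [Function.update_of_ne hji, if_neg hji]
      exact hasDerivAt_const _ _
  have hsum := HasDerivAt.fun_sum h
  rw [Finset.sum_ite_eq' _ i, if_pos hi] at hsum
  exact hsum

lemma h1Ham_dQ (n i : ℕ) (hi : i ∈ Finset.Icc 1 (2 * n - 1)) (q p : ℕ → ℝ) :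
    HasDerivAt (fun x => h1Ham n (Function.update q i x) p)
      ((if i - 1 ∈ Finset.Icc 1 (2 * n - 1) then
          Real.exp (p (i - 1) + (q (i - 1 + 1) - q (i - 1 - 1)) / 2) / 2 else 0)
       - (if i + 1 ∈ Finset.Icc 1 (2 * n - 1) then
          Real.exp (p (i + 1) + (q (i + 1 + 1) - q (i + 1 - 1)) / 2) / 2 else 0)) (q i) := by
  obtain ⟨hi1, hi2⟩ := Finset.mem_Icc.mp hi
  have h : ∀ j ∈ Finset.Icc 1 (2 * n - 1),
      HasDerivAt (fun x => Real.exp (p j +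
          (Function.update q i x (j + 1) - Function.update q i x (j - 1)) / 2))
        ((if j + 1 = i then Real.exp (p j + (q (j + 1) - q (j - 1)) / 2) / 2 else 0)
         - (if j - 1 = i then Real.exp (p j + (q (j + 1) - q (j - 1)) / 2) / 2 else 0)) (q i) := by
    intro j hj
    have hj1 : 1 ≤ j := (Finset.mem_Icc.mp hj).1
    by_cases h1 : j + 1 = i
    · have h2 : j - 1 ≠ i := by omega
      simp only [if_pos h1, if_neg h2, sub_zero]
      have hup1 : ∀ x : ℝ, Function.update q i x (j + 1) = x := fun x => by
        rw [h1, Function.update_self]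
      have hup2 : ∀ x : ℝ, Function.update q i x (j - 1) = q (j - 1) := fun x =>
        Function.update_of_ne h2 x q
      simp only [hup1, hup2]
      have key := ((((hasDerivAt_id (q i)).sub_const (q (j - 1))).div_const 2).const_add (p j)).exp
      simp only [id_eq] at key
      convert key using 1
      rw [h1]; ring
    · by_cases h2 : j - 1 = i
      · simp only [if_neg h1, if_pos h2, zero_sub]
        have hup1 : ∀ x : ℝ, Function.update q i x (j + 1) = q (j + 1) := fun x =>
          Function.update_of_ne h1 x q
        have hup2 : ∀ x : ℝ, Function.update q i x (j - 1) = x := fun x => by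
          rw [h2, Function.update_self]
        simp only [hup1, hup2]
        have key := ((((hasDerivAt_id (q i)).const_sub (q (j + 1))).div_const 2).const_add
          (p j)).exp
        simp only [id_eq] at key
        convert key using 1
        rw [h2]; ring
      · simp only [if_neg h1, if_neg h2, sub_zero]
        have hup1 : ∀ x : ℝ, Function.update q i x (j + 1) = q (j + 1) := fun x =>
          Function.update_of_ne h1 x q
        have hup2 : ∀ x : ℝ, Function.update q i x (j - 1) = q (j - 1) := fun x =>
          Function.update_of_ne h2 x q
        simp only [hup1, hup2]
        exact hasDerivAt_const _ _
  have hsum := HasDerivAt.fun_sum h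
  rw [Finset.sum_sub_distrib] at hsum
  have e1 : (∑ j ∈ Finset.Icc 1 (2 * n - 1),
      (if j + 1 = i then Real.exp (p j + (q (j + 1) - q (j - 1)) / 2) / 2 else 0))
      = (if i - 1 ∈ Finset.Icc 1 (2 * n - 1) then
          Real.exp (p (i - 1) + (q (i - 1 + 1) - q (i - 1 - 1)) / 2) / 2 else 0) := by
    rw [show (∑ j ∈ Finset.Icc 1 (2 * n - 1),
        (if j + 1 = i then Real.exp (p j + (q (j + 1) - q (j - 1)) / 2) / 2 else 0))
        = ∑ j ∈ Finset.Icc 1 (2 * n - 1),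
        (if j = i - 1 then Real.exp (p j + (q (j + 1) - q (j - 1)) / 2) / 2 else 0) from
      Finset.sum_congr rfl fun j hj => by
        have hj1 : 1 ≤ j := (Finset.mem_Icc.mp hj).1
        by_cases hc : j + 1 = i
        · rw [if_pos hc, if_pos (by omega)]
        · rw [if_neg hc, if_neg (by omega)]]
    rw [Finset.sum_ite_eq' _ (i - 1)]
  have e2 : (∑ j ∈ Finset.Icc 1 (2 * n - 1),
      (if j - 1 = i then Real.exp (p j + (q (j + 1) - q (j - 1)) / 2) / 2 else 0))
      = (if i + 1 ∈ Finset.Icc 1 (2 * n - 1) then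
          Real.exp (p (i + 1) + (q (i + 1 + 1) - q (i + 1 - 1)) / 2) / 2 else 0) := by
    rw [show (∑ j ∈ Finset.Icc 1 (2 * n - 1),
        (if j - 1 = i then Real.exp (p j + (q (j + 1) - q (j - 1)) / 2) / 2 else 0))
        = ∑ j ∈ Finset.Icc 1 (2 * n - 1),
        (if j = i + 1 then Real.exp (p j + (q (j + 1) - q (j - 1)) / 2) / 2 else 0) from
      Finset.sum_congr rfl fun j hj => by
        have hj1 : 1 ≤ j := (Finset.mem_Icc.mp hj).1
        by_cases hc : j - 1 = i
        · rw [if_pos hc, if_pos (by omega)]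
        · rw [if_neg hc, if_neg (by omega)]]
    rw [Finset.sum_ite_eq' _ (i + 1)]
  rw [e1, e2] at hsum
  exact hsum

/-- The canonical Hamiltonian system `q̇ᵢ = ∂h₁/∂pᵢ`, `ṗᵢ = -∂h₁/∂qᵢ` projects,
under the Volterra map `uᵢ = exp(pᵢ + (1/2)(qᵢ₊₁ - qᵢ₋₁))` (`q₀ = q_{2n} = 0`),
to the KM system `u̇ᵢ = uᵢ(uᵢ₊₁ - uᵢ₋₁)` with `u₀ = u_{2n} = 0`. -/
theorem volterra_realization_projects_to_km (n : ℕ) (hn : 0 < n) (q p : ℝ → ℕ → ℝ)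
    (hq0 : ∀ t, q t 0 = 0) (hq2n : ∀ t, q t (2 * n) = 0)
    (hqdot : ∀ t : ℝ, ∀ i ∈ Finset.Icc 1 (2 * n - 1),
      HasDerivAt (fun s => q s i)
        (deriv (fun x => h1Ham n (q t) (Function.update (p t) i x)) (p t i)) t)
    (hpdot : ∀ t : ℝ, ∀ i ∈ Finset.Icc 1 (2 * n - 1),
      HasDerivAt (fun s => p s i)
        (-(deriv (fun x => h1Ham n (Function.update (q t) i x) (p t)) (q t i))) t)
    (u : ℝ → ℕ → ℝ)
    (hu : ∀ t i, u t i = if 1 ≤ i ∧ i ≤ 2 * n - 1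
      then Real.exp (p t i + (q t (i + 1) - q t (i - 1)) / 2) else 0) :
    ∀ t : ℝ, ∀ i ∈ Finset.Icc 1 (2 * n - 1),
      HasDerivAt (fun s => u s i) (u t i * (u t (i + 1) - u t (i - 1))) t := by
  intro t i hi
  obtain ⟨hi1, hi2⟩ := Finset.mem_Icc.mp hi
  have hui : u t i = Real.exp (p t i + (q t (i + 1) - q t (i - 1)) / 2) := by
    rw [hu]; exact if_pos ⟨hi1, hi2⟩
  -- derivative of q at index i+1
  have hq1 : HasDerivAt (fun s => q s (i + 1)) (u t (i + 1)) t := by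
    by_cases h : i + 1 ≤ 2 * n - 1
    · have hmem : i + 1 ∈ Finset.Icc 1 (2 * n - 1) := Finset.mem_Icc.mpr ⟨by omega, h⟩
      have hd := hqdot t (i + 1) hmem
      rw [(h1Ham_dP n (i + 1) hmem (q t) (p t)).deriv] at hd
      have hval : u t (i + 1)
          = Real.exp (p t (i + 1) + (q t (i + 1 + 1) - q t (i + 1 - 1)) / 2) := by
        rw [hu]; exact if_pos ⟨by omega, h⟩
      rw [hval]; exact hd
    · have h2n : i + 1 = 2 * n := by omega
      have hfun : (fun s => q s (i + 1)) = fun _ => (0 : ℝ) := funext fun s => by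
        rw [h2n]; exact hq2n s
      have hu0 : u t (i + 1) = 0 := by rw [hu]; exact if_neg (by omega)
      rw [hfun, hu0]; exact hasDerivAt_const _ _
  -- derivative of q at index i-1
  have hq0' : HasDerivAt (fun s => q s (i - 1)) (u t (i - 1)) t := by
    by_cases h : 2 ≤ i
    · have hmem : i - 1 ∈ Finset.Icc 1 (2 * n - 1) := Finset.mem_Icc.mpr ⟨by omega, by omega⟩
      have hd := hqdot t (i - 1) hmem
      rw [(h1Ham_dP n (i - 1) hmem (q t) (p t)).deriv] at hd
      have hval : u t (i - 1)
          = Real.exp (p t (i - 1) + (q t (i - 1 + 1) - q t (i - 1 - 1)) / 2) := by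
        rw [hu]; exact if_pos ⟨by omega, by omega⟩
      rw [hval]; exact hd
    · have h0 : i - 1 = 0 := by omega
      have hfun : (fun s => q s (i - 1)) = fun _ => (0 : ℝ) := funext fun s => by
        rw [h0]; exact hq0 s
      have hu0 : u t (i - 1) = 0 := by rw [hu]; exact if_neg (by omega)
      rw [hfun, hu0]; exact hasDerivAt_const _ _
  -- derivative of p at index i
  have hp' : HasDerivAt (fun s => p s i) ((u t (i + 1) - u t (i - 1)) / 2) t := by
    have hd := hpdot t i hi
    rw [(h1Ham_dQ n i hi (q t) (p t)).deriv] at hd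
    have e1 : (if i - 1 ∈ Finset.Icc 1 (2 * n - 1) then
        Real.exp (p t (i - 1) + (q t (i - 1 + 1) - q t (i - 1 - 1)) / 2) / 2 else 0)
        = u t (i - 1) / 2 := by
      by_cases h : i - 1 ∈ Finset.Icc 1 (2 * n - 1)
      · rw [if_pos h, hu t (i - 1), if_pos (Finset.mem_Icc.mp h)]
      · rw [if_neg h, hu t (i - 1), if_neg (fun hc => h (Finset.mem_Icc.mpr hc))]
        norm_num
    have e2 : (if i + 1 ∈ Finset.Icc 1 (2 * n - 1) then
        Real.exp (p t (i + 1) + (q t (i + 1 + 1) - q t (i + 1 - 1)) / 2) / 2 else 0)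
        = u t (i + 1) / 2 := by
      by_cases h : i + 1 ∈ Finset.Icc 1 (2 * n - 1)
      · rw [if_pos h, hu t (i + 1), if_pos (Finset.mem_Icc.mp h)]
      · rw [if_neg h, hu t (i + 1), if_neg (fun hc => h (Finset.mem_Icc.mpr hc))]
        norm_num
    rw [e1, e2] at hd
    convert hd using 1
    ring
  have hfun : (fun s => u s i)
      = fun s => Real.exp (p s i + (q s (i + 1) - q s (i - 1)) / 2) := funext fun s => by
    rw [hu]; exact if_pos ⟨hi1, hi2⟩
  rw [hfun]
  have key := (hp'.add ((hq1.sub hq0').div_const 2)).exp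
  simp only [Pi.add_apply, Pi.sub_apply] at key
  convert key using 1
  rw [hui]
  ring
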